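/- In any hyperbolic fine graph, for any pair of vertices a and x, the set of all vertices lying on some geodesic between a and x is finite. -/

import Mathlib

/-- A graph: vertices, oriented edges, origin/terminus maps, and a
fixed-point-free edge-reversing involution. -/
structure MGraph where
  V : Type
  E : Type
  o : E → V
  t : E → V
  rev : E → E
  rev_o : ∀ e, o (rev e) = t e
  rev_t : ∀ e, t (rev e) = o e
  rev_rev : ∀ e, rev (rev e) = e
  rev_ne : ∀ e, rev e ≠ e

namespace MGraph

variable (X : MGraph)

/-- A walk from `x` to `y` given by a list of consecutive edges. -/
def IsWalk : List X.E → X.V → X.V → Prop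
  | [], x, y => x = y
  | e :: es, x, y => X.o e = x ∧ IsWalk es (X.t e) y

/-- The vertices visited by a walk starting at `x`. -/
def walkVerts : X.V → List X.E → List X.V
  | x, [] => [x]
  | x, e :: es => x :: walkVerts (X.t e) es

/-- The graph metric (length of each edge is 1), valued in `ℕ∞`. -/
noncomputable def dist (x y : X.V) : ℕ∞ :=
  sInf {n : ℕ∞ | ∃ es, X.IsWalk es x y ∧ (es.length : ℕ∞) = n}

/-- The distance from `x` to `y` in the graph with the vertex `v` removed. -/
noncomputable def delDist (v x y : X.V) : ℕ∞ :=
  sInf {n : ℕ∞ | ∃ es, X.IsWalk es x y ∧ v ∉ X.walkVerts x es ∧ (es.length : ℕ∞) = n}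

/-- The angle at `v = t e1 = o e2` between two edges `e1, e2`: the distance
from `o e1` to `t e2` in the graph with the vertex `t e1` removed. -/
noncomputable def angle (e1 e2 : X.E) : ℕ∞ :=
  X.delDist (X.t e1) (X.o e1) (X.t e2)

/-- A geodesic is a walk whose length realizes the distance. -/
def IsGeodesic (es : List X.E) (x y : X.V) : Prop :=
  X.IsWalk es x y ∧ (es.length : ℕ∞) = X.dist x y

/-- `∠_c(x1,x2) > θ` : there are edges `e1, e2` with `t e1 = o e2 = c`, each
lying on a geodesic between `c` and `x_i`, making an angle `> θ` at `c`. -/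
def AngleGT (c x1 x2 : X.V) (θ : ℕ∞) : Prop :=
  ∃ (e1 e2 : X.E) (es1 es2 : List X.E), X.t e1 = c ∧ X.o e2 = c ∧
    X.IsGeodesic (X.rev e1 :: es1) c x1 ∧ X.IsGeodesic (e2 :: es2) c x2 ∧
    θ < X.angle e1 e2

/-- All pairs of consecutive edges of a walk make an angle at most `θ`. -/
def AngleBounded (θ : ℕ∞) : List X.E → Prop
  | [] => True
  | [_] => True
  | e :: e' :: es => X.angle e e' ≤ θ ∧ AngleBounded θ (e' :: es)

/-- `v` is a vertex of the cone of parameter `θ` around the oriented edge `e`: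
it lies on a path starting at `o e` by the edge `e`, of length at most `θ`,
whose consecutive edges make angles at most `θ`. -/
def InConeV (θ : ℕ∞) (e : X.E) (v : X.V) : Prop :=
  ∃ (es : List X.E) (y : X.V), X.IsWalk (e :: es) (X.o e) y ∧
    ((e :: es).length : ℕ∞) ≤ θ ∧ X.AngleBounded θ (e :: es) ∧
    v ∈ X.walkVerts (X.o e) (e :: es)

/-- `ε` is an edge of the cone of parameter `θ` around the oriented edge `e`. -/
def InConeE (θ : ℕ∞) (e ε : X.E) : Prop :=
  ∃ (es : List X.E) (y : X.V), X.IsWalk (e :: es) (X.o e) y ∧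
    ((e :: es).length : ℕ∞) ≤ θ ∧ X.AngleBounded θ (e :: es) ∧
    (ε ∈ e :: es ∨ X.rev ε ∈ e :: es)

/-- A graph is fine if for each edge `e` and each `L`, only finitely many
edges arrive at `o e` making an angle at most `L` with `e`. -/
def Fine : Prop :=
  ∀ (e : X.E) (L : ℕ), {e' : X.E | X.t e' = X.o e ∧ X.angle e' e ≤ (L : ℕ∞)}.Finite

/-- δ-hyperbolicity: geodesic triangles are δ-thin. -/
def Hyperbolic (δ : ℕ) : Prop :=
  ∀ (a b c : X.V) (p q r : List X.E),
    X.IsGeodesic p a b → X.IsGeodesic q b c → X.IsGeodesic r a c →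
    ∀ v ∈ X.walkVerts a p, ∃ w, (w ∈ X.walkVerts b q ∨ w ∈ X.walkVerts a r) ∧
      X.dist v w ≤ (δ : ℕ∞)

/-- The four point inequality form of δ-hyperbolicity. -/
def FourPoint (δ : ℕ) : Prop :=
  ∀ a x y y' : X.V,
    X.dist a x + X.dist y y' ≤
      max (X.dist a y + X.dist y' x) (X.dist a y' + X.dist y x) + (δ : ℕ∞)

/-- Connectedness. -/
def Connected : Prop := ∀ x y : X.V, ∃ es, X.IsWalk es x y

/-- `t` is on an `α`-geodesic between `x` and `a`. -/
def OnAlphaGeod (α : ℕ∞) (t x a : X.V) : Prop :=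
  X.dist x t + X.dist t a ≤ X.dist x a + α

/-- The set `𝓔_{a,x}(ρ)` of edges at distance `ρ` from `a` lying on
geodesics between `a` and `x`. -/
def GeodEdgeAt (a x : X.V) (ρ : ℕ∞) (e : X.E) : Prop :=
  X.dist a (X.o e) = ρ ∧ ∃ es, (X.IsGeodesic es a x ∨ X.IsGeodesic es x a) ∧ e ∈ es

/-- The set `U_α[a,x]` of points on `α`-conical-geodesics between `x` and `a`. -/
def ConicalSet (α : ℕ) (a x : X.V) : Set X.V :=
  {t | X.OnAlphaGeod (α : ℕ∞) t x a ∧ X.dist a t ≤ X.dist a x ∧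
       ∀ e, X.GeodEdgeAt a x (X.dist a t) e → X.InConeV ((40 * α : ℕ) : ℕ∞) e t}

/-- End vertex of a walk. -/
def wEnd (X : MGraph) : X.V → List X.E → X.V
  | x, [] => x
  | _, e :: es => X.wEnd (X.t e) es

variable {X : MGraph}

lemma isWalk_nil {x y : X.V} : X.IsWalk [] x y ↔ x = y := Iff.rfl

lemma isWalk_cons {e : X.E} {es : List X.E} {x y : X.V} :
    X.IsWalk (e :: es) x y ↔ X.o e = x ∧ X.IsWalk es (X.t e) y := Iff.rfl

lemma walkVerts_nil {x : X.V} : X.walkVerts x [] = [x] := rfl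

lemma walkVerts_cons {x : X.V} {e : X.E} {es : List X.E} :
    X.walkVerts x (e :: es) = x :: X.walkVerts (X.t e) es := rfl

lemma wEnd_nil {x : X.V} : X.wEnd x [] = x := rfl

lemma wEnd_cons {x : X.V} {e : X.E} {es : List X.E} :
    X.wEnd x (e :: es) = X.wEnd (X.t e) es := rfl

lemma self_mem_walkVerts (x : X.V) (es : List X.E) : x ∈ X.walkVerts x es := by
  cases es <;> simp [walkVerts]

lemma isWalk_append {es fs : List X.E} {x y z : X.V}
    (h1 : X.IsWalk es x y) (h2 : X.IsWalk fs y z) : X.IsWalk (es ++ fs) x z := by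
  induction es generalizing x with
  | nil => rw [isWalk_nil] at h1; subst h1; simpa using h2
  | cons e es ih => exact ⟨h1.1, ih h1.2⟩

lemma isWalk_wEnd {es : List X.E} {x y : X.V} (h : X.IsWalk es x y) : X.wEnd x es = y := by
  induction es generalizing x with
  | nil => exact (h : x = y)
  | cons e es ih => exact ih h.2

lemma isWalk_split {es fs : List X.E} {x z : X.V} (h : X.IsWalk (es ++ fs) x z) :
    X.IsWalk es x (X.wEnd x es) ∧ X.IsWalk fs (X.wEnd x es) z := by
  induction es generalizing x with
  | nil => exact ⟨rfl, h⟩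
  | cons e es ih =>
    obtain ⟨ho, hw⟩ := h
    obtain ⟨h1, h2⟩ := ih hw
    exact ⟨⟨ho, h1⟩, h2⟩

lemma wEnd_mem_walkVerts {es : List X.E} {x : X.V} : X.wEnd x es ∈ X.walkVerts x es := by
  induction es generalizing x with
  | nil => simp [walkVerts, wEnd]
  | cons e es ih => exact List.mem_cons_of_mem _ ih

lemma mem_walkVerts_append {es fs : List X.E} {x v : X.V} :
    v ∈ X.walkVerts x (es ++ fs) ↔
      v ∈ X.walkVerts x es ∨ v ∈ X.walkVerts (X.wEnd x es) fs := by
  induction es generalizing x with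
  | nil =>
    simp only [List.nil_append, walkVerts_nil, wEnd_nil, List.mem_singleton]
    constructor
    · exact fun h => Or.inr h
    · rintro (rfl | h)
      · exact self_mem_walkVerts _ _
      · exact h
  | cons e es ih =>
    simp only [List.cons_append, walkVerts_cons, List.mem_cons, wEnd_cons, ih, or_assoc]

lemma mem_walkVerts_split {es : List X.E} {x v : X.V} (h : v ∈ X.walkVerts x es) :
    ∃ es1 es2, es = es1 ++ es2 ∧ X.wEnd x es1 = v := by
  induction es generalizing x with
  | nil =>
    simp only [walkVerts_nil, List.mem_singleton] at h
    exact ⟨[], [], rfl, h.symm⟩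
  | cons e es ih =>
    rcases List.mem_cons.mp h with h' | h'
    · exact ⟨[], e :: es, rfl, h'.symm⟩
    · obtain ⟨a, b, rfl, hv⟩ := ih h'
      exact ⟨e :: a, b, rfl, hv⟩

lemma dist_le_walk {es : List X.E} {x y : X.V} (h : X.IsWalk es x y) :
    X.dist x y ≤ (es.length : ℕ∞) :=
  sInf_le ⟨es, h, rfl⟩

lemma dist_self (x : X.V) : X.dist x x = 0 := by
  have := dist_le_walk (es := []) (X := X) (x := x) (y := x) rfl
  simpa using this

lemma exists_geodesic {x y : X.V} {n : ℕ} (h : X.dist x y = (n : ℕ∞)) :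
    ∃ es, X.IsWalk es x y ∧ es.length = n := by
  by_contra hc
  push_neg at hc
  have hge : ((n : ℕ∞) + 1) ≤ X.dist x y := by
    apply le_sInf
    rintro m ⟨es, hw, rfl⟩
    have h1 : (n : ℕ∞) ≤ (es.length : ℕ∞) := h ▸ dist_le_walk hw
    have h2 : n ≤ es.length := by exact_mod_cast h1
    have h3 : es.length ≠ n := hc es hw
    have : n + 1 ≤ es.length := by omega
    exact_mod_cast this
  rw [h] at hge
  have : n + 1 ≤ n := by exact_mod_cast hge
  omega

lemma isWalk_rev {es : List X.E} {x y : X.V} (h : X.IsWalk es x y) :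
    X.IsWalk ((es.map X.rev).reverse) y x := by
  induction es generalizing x with
  | nil => exact ((h : x = y)).symm
  | cons e es ih =>
    obtain ⟨ho, hw⟩ := h
    rw [List.map_cons, List.reverse_cons]
    refine isWalk_append (ih hw) ⟨X.rev_o e, ?_⟩
    rw [isWalk_nil, X.rev_t, ho]

lemma mem_walkVerts_rev {es : List X.E} {x y v : X.V} (h : X.IsWalk es x y) :
    v ∈ X.walkVerts y ((es.map X.rev).reverse) ↔ v ∈ X.walkVerts x es := by
  induction es generalizing x with
  | nil => rw [isWalk_nil] at h; subst h; simp
  | cons e es ih =>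
    obtain ⟨ho, hw⟩ := h
    rw [List.map_cons, List.reverse_cons, mem_walkVerts_append]
    have hend : X.wEnd y ((es.map X.rev).reverse) = X.t e := isWalk_wEnd (isWalk_rev hw)
    rw [hend, ih hw]
    subst ho
    simp only [walkVerts_cons, walkVerts_nil, List.mem_cons, List.mem_singleton,
      X.rev_t, List.not_mem_nil, or_false]
    constructor
    · rintro (h' | rfl | rfl)
      · exact Or.inr h'
      · exact Or.inr (self_mem_walkVerts _ _)
      · exact Or.inl rfl
    · rintro (rfl | h')
      · exact Or.inr (Or.inr rfl)
      · exact Or.inl h'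

lemma dist_symm (x y : X.V) : X.dist x y = X.dist y x := by
  have key : ∀ u w : X.V, X.dist u w ≤ X.dist w u := by
    intro u w
    apply le_sInf
    rintro m ⟨es, hw, rfl⟩
    have := dist_le_walk (isWalk_rev hw)
    simpa using this
  exact le_antisymm (key x y) (key y x)

lemma dist_triangle (x y z : X.V) : X.dist x z ≤ X.dist x y + X.dist y z := by
  rcases eq_or_ne (X.dist x y) ⊤ with h1 | h1
  · simp [h1]
  rcases eq_or_ne (X.dist y z) ⊤ with h2 | h2
  · simp [h2]
  obtain ⟨m1, hm1⟩ := WithTop.ne_top_iff_exists.mp h1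
  obtain ⟨m2, hm2⟩ := WithTop.ne_top_iff_exists.mp h2
  obtain ⟨es1, hw1, hl1⟩ := exists_geodesic hm1.symm
  obtain ⟨es2, hw2, hl2⟩ := exists_geodesic hm2.symm
  have := dist_le_walk (isWalk_append hw1 hw2)
  rw [← hm1, ← hm2]
  calc X.dist x z ≤ (((es1 ++ es2).length : ℕ) : ℕ∞) := this
    _ = (m1 : ℕ∞) + (m2 : ℕ∞) := by
        rw [List.length_append, hl1, hl2]; push_cast; ring

lemma geodesic_split {es fs : List X.E} {x z : X.V} (h : X.IsGeodesic (es ++ fs) x z) :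
    X.IsGeodesic es x (X.wEnd x es) ∧ X.IsGeodesic fs (X.wEnd x es) z := by
  obtain ⟨hw, hlen⟩ := h
  obtain ⟨h1, h2⟩ := isWalk_split hw
  set y := X.wEnd x es with hy
  have d1 := dist_le_walk h1
  have d2 := dist_le_walk h2
  obtain ⟨m1, e1, le1⟩ := WithTop.le_coe_iff.mp d1
  obtain ⟨m2, e2, le2⟩ := WithTop.le_coe_iff.mp d2
  have dt : X.dist x z ≤ X.dist x y + X.dist y z := dist_triangle x y z
  rw [e1, e2, ← hlen] at dt
  have hlc : es.length + fs.length ≤ m1 + m2 := by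
    rw [List.length_append] at dt
    have h' : ((es.length + fs.length : ℕ) : ℕ∞) ≤ ((m1 + m2 : ℕ) : ℕ∞) := by
      push_cast; exact dt
    exact_mod_cast h'
  have hm1 : m1 = es.length := by omega
  have hm2 : m2 = fs.length := by omega
  rw [hm1] at e1
  rw [hm2] at e2
  exact ⟨⟨h1, e1.symm⟩, ⟨h2, e2.symm⟩⟩

lemma geodesic_no_revisit {e : X.E} {es : List X.E} {v x : X.V}
    (h : X.IsGeodesic (e :: es) v x) : v ∉ X.walkVerts (X.t e) es := by
  intro hv
  obtain ⟨es1, es2, rfl, hsplit⟩ := mem_walkVerts_split hv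
  obtain ⟨hw, hlen⟩ := h
  have hw' : X.IsWalk ((e :: es1) ++ es2) v x := by simpa using hw
  have hsp := isWalk_split hw'
  have hEnd : X.wEnd v (e :: es1) = v := by rw [wEnd_cons, hsplit]
  rw [hEnd] at hsp
  have hle := dist_le_walk hsp.2
  rw [← hlen] at hle
  have : (e :: (es1 ++ es2)).length ≤ es2.length := by exact_mod_cast hle
  simp at this

lemma delDist_le {v x y : X.V} {es : List X.E} (hw : X.IsWalk es x y)
    (hv : v ∉ X.walkVerts x es) : X.delDist v x y ≤ (es.length : ℕ∞) :=
  sInf_le ⟨es, hw, hv, rfl⟩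

variable {X : MGraph}

/-- Key geometric lemma: two geodesics from `v` to `x` start at bounded angle. -/
lemma key_angle {δ : ℕ} (hδ : X.Hyperbolic δ) {v x : X.V} {e e0 : X.E}
    {g g0 : List X.E} (hp : X.IsGeodesic (e :: g) v x)
    (hp0 : X.IsGeodesic (e0 :: g0) v x) :
    X.delDist v (X.t e) (X.t e0) ≤ ((6 * δ + 6 : ℕ) : ℕ∞) := by
  have hlen_eq : g.length = g0.length := by
    have h1 := hp.2.trans hp0.2.symm
    have h2 : (e :: g).length = (e0 :: g0).length := by exact_mod_cast h1
    simpa using h2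
  by_cases hsmall : g.length ≤ 3 * δ + 1
  · -- short case: go through x
    have hwg : X.IsWalk g (X.t e) x := hp.1.2
    have hwg0 : X.IsWalk g0 (X.t e0) x := hp0.1.2
    have hrev : X.IsWalk ((g0.map X.rev).reverse) x (X.t e0) := isWalk_rev hwg0
    have hwalk := isWalk_append hwg hrev
    have hnv : v ∉ X.walkVerts (X.t e) (g ++ (g0.map X.rev).reverse) := by
      intro hv
      rcases mem_walkVerts_append.mp hv with h' | h'
      · exact geodesic_no_revisit hp h'
      · rw [isWalk_wEnd hwg] at h'
        exact geodesic_no_revisit hp0 ((mem_walkVerts_rev hwg0).mp h')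
    refine (delDist_le hwalk hnv).trans ?_
    have hl : (g ++ (g0.map X.rev).reverse).length ≤ 6 * δ + 6 := by
      simp only [List.length_append, List.length_reverse, List.length_map]
      omega
    exact_mod_cast hl
  · push_neg at hsmall
    set j := 2 * δ + 1 with hj
    have hjle : j ≤ g.length := by omega
    have hp1 : X.IsGeodesic ((e :: g.take j) ++ g.drop j) v x := by
      rw [List.cons_append, List.take_append_drop]; exact hp
    obtain ⟨hpre, hsuf⟩ := geodesic_split hp1
    set p' := X.wEnd v (e :: g.take j) with hp'def
    have hlenpre : (e :: g.take j).length = j + 1 := by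
      simp [List.length_take, Nat.min_eq_left hjle]
    have hdvp' : X.dist v p' = ((j + 1 : ℕ) : ℕ∞) := by
      rw [← hpre.2, hlenpre]
    have hdp'x : X.dist p' x = ((g.length - j : ℕ) : ℕ∞) := by
      rw [← hsuf.2]; simp
    have hq : X.IsGeodesic [] x x := ⟨rfl, by simp [dist_self]⟩
    have hp'mem : p' ∈ X.walkVerts v (e :: g) := by
      rw [← List.take_append_drop j g, ← List.cons_append, mem_walkVerts_append]
      exact Or.inl wEnd_mem_walkVerts
    obtain ⟨w, hwmem, hdw⟩ := hδ v x x (e :: g) [] (e0 :: g0) hp hq hp0 p' hp'mem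
    rcases hwmem with hwx | hwmem
    · exfalso
      simp only [walkVerts_nil, List.mem_singleton] at hwx
      subst hwx
      rw [hdp'x] at hdw
      have : g.length - j ≤ δ := by exact_mod_cast hdw
      omega
    · obtain ⟨q1, q2, hqeq, hwend⟩ := mem_walkVerts_split hwmem
      have hp0' : X.IsGeodesic (q1 ++ q2) v x := by rw [← hqeq]; exact hp0
      obtain ⟨hq1, hq2⟩ := geodesic_split hp0'
      rw [hwend] at hq1 hq2
      have hdvw : X.dist v w = ((q1.length : ℕ) : ℕ∞) := hq1.2.symm
      have hdwp' : X.dist w p' ≤ (δ : ℕ∞) := by rw [dist_symm]; exact hdw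
      have h1 : X.dist v w ≤ X.dist v p' + X.dist p' w := dist_triangle v p' w
      rw [hdvw, hdvp'] at h1
      have h1' : ((q1.length : ℕ) : ℕ∞) ≤ ((j + 1 + δ : ℕ) : ℕ∞) := by
        push_cast
        exact h1.trans (add_le_add_right hdw _)
      have hub : q1.length ≤ j + 1 + δ := by exact_mod_cast h1'
      have h2 : X.dist v p' ≤ X.dist v w + X.dist w p' := dist_triangle v w p'
      rw [hdvp', hdvw] at h2
      have h2' : ((j + 1 : ℕ) : ℕ∞) ≤ ((q1.length + δ : ℕ) : ℕ∞) := by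
        push_cast
        exact h2.trans (add_le_add_right hdwp' _)
      have hlb : j + 1 ≤ q1.length + δ := by exact_mod_cast h2'
      cases q1 with
      | nil => exfalso; simp only [List.length_nil] at hlb; omega
      | cons f q1' =>
        rw [List.cons_append] at hqeq
        injection hqeq with hf hg
        subst hf
        -- piece 1 : g.take j from t e to p'
        have hP1 : X.IsWalk (g.take j) (X.t e) p' := hpre.1.2
        have hP1v : v ∉ X.walkVerts (X.t e) (g.take j) := by
          intro hv
          apply geodesic_no_revisit hp
          rw [← List.take_append_drop j g, mem_walkVerts_append]
          exact Or.inl hv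
        -- piece 2 : geodesic from p' to w
        obtain ⟨ℓ, hdeq, hℓδ⟩ := WithTop.le_coe_iff.mp hdw
        obtain ⟨fs, hfw, hflen⟩ := exists_geodesic hdeq
        have hP2v : v ∉ X.walkVerts p' fs := by
          intro hv
          obtain ⟨fs1, fs2, rfl, hfend⟩ := mem_walkVerts_split hv
          have hw1 := (isWalk_split hfw).1
          rw [hfend] at hw1
          have hle1 := dist_le_walk hw1
          rw [dist_symm, hdvp'] at hle1
          have hlen1 : fs1.length ≤ ℓ := by
            rw [← hflen, List.length_append]; omega
          have : ((j + 1 : ℕ) : ℕ∞) ≤ ((δ : ℕ) : ℕ∞) := by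
            refine hle1.trans ?_
            exact_mod_cast Nat.cast_le.mpr (hlen1.trans hℓδ)
          have : j + 1 ≤ δ := by exact_mod_cast this
          omega
        -- piece 3 : reversed q1' from w to t e0
        have hwq1' : X.IsWalk q1' (X.t e0) w := hq1.1.2
        have hP3 : X.IsWalk ((q1'.map X.rev).reverse) w (X.t e0) := isWalk_rev hwq1'
        have hP3v : v ∉ X.walkVerts w ((q1'.map X.rev).reverse) := by
          intro hv
          apply geodesic_no_revisit hp0
          rw [hg, mem_walkVerts_append]
          exact Or.inl ((mem_walkVerts_rev hwq1').mp hv)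
        -- assemble
        have hwalk : X.IsWalk (g.take j ++ (fs ++ (q1'.map X.rev).reverse))
            (X.t e) (X.t e0) :=
          isWalk_append hP1 (isWalk_append hfw hP3)
        have hnv : v ∉ X.walkVerts (X.t e)
            (g.take j ++ (fs ++ (q1'.map X.rev).reverse)) := by
          intro hv
          rcases mem_walkVerts_append.mp hv with h' | h'
          · exact hP1v h'
          · rw [isWalk_wEnd hP1] at h'
            rcases mem_walkVerts_append.mp h' with h'' | h''
            · exact hP2v h''
            · rw [isWalk_wEnd hfw] at h''
              exact hP3v h''
        refine (delDist_le hwalk hnv).trans ?_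
        have hl : (g.take j ++ (fs ++ (q1'.map X.rev).reverse)).length ≤ 6 * δ + 6 := by
          simp only [List.length_append, List.length_reverse, List.length_map,
            List.length_take, Nat.min_eq_left hjle, hflen]
          simp only [List.length_cons] at hub
          omega
        exact_mod_cast hl

lemma exists_nat_of_ne_top {d : ℕ∞} (h : d ≠ ⊤) : ∃ m : ℕ, d = (m : ℕ∞) := by
  obtain ⟨m, hm⟩ := WithTop.ne_top_iff_exists.mp h
  exact ⟨m, hm.symm⟩

lemma cast_add_eq {p q r : ℕ} (h : p + q = r) : (p : ℕ∞) + (q : ℕ∞) = (r : ℕ∞) := by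
  exact_mod_cast congrArg (Nat.cast : ℕ → ℕ∞) h

/-- Fineness + hyperbolicity: finitely many geodesic-starting edges at a vertex. -/
lemma G_finite {δ : ℕ} (hδ : X.Hyperbolic δ) (hfine : X.Fine) (x v : X.V)
    (m : ℕ) (hm : X.dist v x = (m : ℕ∞)) :
    {e : X.E | X.o e = v ∧ 1 + X.dist (X.t e) x = X.dist v x}.Finite := by
  have hext : ∀ e, X.o e = v → 1 + X.dist (X.t e) x = X.dist v x →
      ∃ g, X.IsGeodesic (e :: g) v x := by
    intro e ho hd
    rw [hm] at hd
    have hnt : X.dist (X.t e) x ≠ ⊤ := by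
      intro ht; rw [ht] at hd; simp at hd
    obtain ⟨d, hdq⟩ := exists_nat_of_ne_top hnt
    rw [hdq] at hd
    have hd' : 1 + d = m := by exact_mod_cast hd
    obtain ⟨g, hgw, hglen⟩ := exists_geodesic hdq
    refine ⟨g, ⟨⟨ho, hgw⟩, ?_⟩⟩
    rw [hm]
    simp only [List.length_cons, hglen]
    exact_mod_cast (by omega : d + 1 = m)
  rcases Set.eq_empty_or_nonempty
      {e : X.E | X.o e = v ∧ 1 + X.dist (X.t e) x = X.dist v x} with hemp | ⟨e0, he0⟩
  · rw [hemp]; exact Set.finite_empty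
  obtain ⟨g0, hg0⟩ := hext e0 he0.1 he0.2
  have hA := (hfine e0 (6 * δ + 6)).image X.rev
  apply hA.subset
  rintro e ⟨ho, hd⟩
  obtain ⟨g, hg⟩ := hext e ho hd
  refine ⟨X.rev e, ⟨?_, ?_⟩, X.rev_rev e⟩
  · rw [X.rev_t, ho]; exact he0.1.symm
  · show X.delDist (X.t (X.rev e)) (X.o (X.rev e)) (X.t e0) ≤ _
    rw [X.rev_t, X.rev_o, ho]
    exact key_angle hδ hg hg0

end MGraph

/-- in a hyperbolic fine graph, the set of vertices lying on some
geodesic between two given vertices `a` and `x` is finite. -/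
theorem stmt_8 (X : MGraph) (δ : ℕ) (hδpos : 0 < δ) (hδ : X.Hyperbolic δ)
    (hfine : X.Fine) (a x : X.V) :
    {v : X.V | ∃ es : List X.E,
      (X.IsGeodesic es a x ∧ v ∈ X.walkVerts a es) ∨
      (X.IsGeodesic es x a ∧ v ∈ X.walkVerts x es)}.Finite := by
  classical
  open MGraph in
  rcases eq_or_ne (X.dist a x) ⊤ with htop | htop
  · apply Set.Finite.subset Set.finite_empty
    rintro v ⟨es, ⟨hgeo, -⟩ | ⟨hgeo, -⟩⟩
    · have := hgeo.2.trans htop; simp at this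
    · have hxa : X.dist x a = ⊤ := (MGraph.dist_symm x a).trans htop
      have := hgeo.2.trans hxa; simp at this
  obtain ⟨n, hn⟩ := MGraph.exists_nat_of_ne_top htop
  -- S k : vertices on geodesics at distance k from a
  set S : ℕ → Set X.V :=
    fun k => {v | X.dist a v = (k : ℕ∞) ∧ (k : ℕ∞) + X.dist v x = (n : ℕ∞)} with hS
  have hSfin : ∀ k, (S k).Finite := by
    intro k
    induction k with
    | zero =>
      apply Set.Finite.subset (Set.finite_singleton a)
      rintro v ⟨h0, -⟩
      obtain ⟨es, hw, hlen⟩ := MGraph.exists_geodesic (n := 0) (by exact_mod_cast h0)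
      rw [List.length_eq_zero_iff] at hlen
      subst hlen
      simp [← MGraph.isWalk_nil.mp hw]
    | succ k ih =>
      have hT : ∀ v ∈ S k,
          (X.t '' {e : X.E | X.o e = v ∧ 1 + X.dist (X.t e) x = X.dist v x}).Finite := by
        intro v hv
        have hnt : X.dist v x ≠ ⊤ := by
          intro ht
          have hv2 := hv.2
          rw [ht] at hv2
          exact (by simp : ((k : ℕ∞) + ⊤ ≠ (n : ℕ∞))) hv2
        obtain ⟨m, hmq⟩ := MGraph.exists_nat_of_ne_top hnt
        exact (MGraph.G_finite hδ hfine x v m hmq).image X.t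
      apply Set.Finite.subset (Set.Finite.biUnion ih hT)
      rintro w ⟨hw1, hw2⟩
      -- getting dist w x as a natural
      have hwnt : X.dist w x ≠ ⊤ := by
        intro ht
        rw [ht] at hw2
        exact (by simp : (((k:ℕ)+1 : ℕ∞) + ⊤ ≠ (n : ℕ∞))) hw2
      obtain ⟨dw, hdw⟩ := MGraph.exists_nat_of_ne_top hwnt
      have hdwn : k + 1 + dw = n := by
        rw [hdw] at hw2
        exact_mod_cast hw2
      -- geodesic from a to w
      obtain ⟨es, hwalk, hlen⟩ := MGraph.exists_geodesic (n := k + 1) (by exact_mod_cast hw1)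
      rcases List.eq_nil_or_concat es with rfl | ⟨es', e, rfl⟩
      · simp at hlen
      rw [List.concat_eq_append] at *
      have hgeode : X.IsGeodesic (es' ++ [e]) a w := by
        refine ⟨hwalk, ?_⟩
        rw [hlen, hw1]
      obtain ⟨hg1, hg2⟩ := MGraph.geodesic_split hgeode
      set v := X.wEnd a es' with hvdef
      have hlen' : es'.length = k := by
        rw [List.length_append] at hlen; simpa using hlen
      have hdav : X.dist a v = (k : ℕ∞) := by rw [← hg1.2, hlen']
      have hoe : X.o e = v := hg2.1.1
      have hte : X.t e = w := hg2.1.2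
      -- dist v x = n - k
      have hvup : X.dist v x ≤ ((1 + dw : ℕ) : ℕ∞) := by
        refine (MGraph.dist_triangle v w x).trans ?_
        have h1 : X.dist v w ≤ (1 : ℕ∞) := by
          have := MGraph.dist_le_walk hg2.1
          simpa using this
        rw [hdw]
        calc X.dist v w + (dw : ℕ∞) ≤ 1 + (dw : ℕ∞) := add_le_add_left h1 _
          _ = ((1 + dw : ℕ) : ℕ∞) := (MGraph.cast_add_eq rfl).symm
      obtain ⟨dv, hdveq, hdvle⟩ := WithTop.le_coe_iff.mp hvup
      have hvlow : n ≤ k + dv := by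
        have h2 : X.dist a x ≤ X.dist a v + X.dist v x := MGraph.dist_triangle a v x
        rw [hn, hdav, hdveq] at h2
        have h3 : (n : ℕ∞) ≤ ((k + dv : ℕ) : ℕ∞) :=
          h2.trans (le_of_eq (MGraph.cast_add_eq rfl))
        exact_mod_cast h3
      have hdveq' : dv = 1 + dw := by omega
      have hvS : v ∈ S k := by
        refine ⟨hdav, ?_⟩
        rw [hdveq, hdveq']
        exact MGraph.cast_add_eq (by omega)
      refine Set.mem_biUnion hvS ⟨e, ⟨hoe, ?_⟩, hte⟩
      rw [hte, hdveq, hdveq', hdw]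
      exact MGraph.cast_add_eq rfl
  -- main inclusion
  have hmain : {v : X.V | ∃ es : List X.E,
      (X.IsGeodesic es a x ∧ v ∈ X.walkVerts a es) ∨
      (X.IsGeodesic es x a ∧ v ∈ X.walkVerts x es)} ⊆
      ⋃ k ∈ Finset.range (n + 1), S k := by
    rintro v ⟨es, ⟨hgeo, hv⟩ | ⟨hgeo, hv⟩⟩
    · obtain ⟨es1, es2, rfl, hwend⟩ := MGraph.mem_walkVerts_split hv
      obtain ⟨hg1, hg2⟩ := MGraph.geodesic_split hgeo
      rw [hwend] at hg1 hg2
      have hsum : es1.length + es2.length = n := by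
        have h' := hgeo.2.trans hn
        rw [List.length_append] at h'
        exact_mod_cast h'
      refine Set.mem_biUnion (x := es1.length)
        (Finset.mem_coe.mpr (Finset.mem_range.mpr (by omega))) ?_
      refine ⟨hg1.2.symm, ?_⟩
      rw [← hg2.2]
      exact MGraph.cast_add_eq hsum
    · obtain ⟨es1, es2, rfl, hwend⟩ := MGraph.mem_walkVerts_split hv
      obtain ⟨hg1, hg2⟩ := MGraph.geodesic_split hgeo
      rw [hwend] at hg1 hg2
      have hsum : es1.length + es2.length = n := by
        have h' : ((es1 ++ es2).length : ℕ∞) = (n : ℕ∞) := by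
          rw [hgeo.2, MGraph.dist_symm x a, hn]
        rw [List.length_append] at h'
        exact_mod_cast h'
      refine Set.mem_biUnion (x := es2.length) (Finset.mem_coe.mpr (Finset.mem_range.mpr
        (show es2.length < n + 1 by omega))) ?_
      constructor
      · rw [MGraph.dist_symm, ← hg2.2]
      · rw [MGraph.dist_symm v x, ← hg1.2]
        exact MGraph.cast_add_eq (by omega)
  exact Set.Finite.subset ((Finset.range (n + 1)).finite_toSet.biUnion fun k _ => hSfin k) hmain
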